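/- For any partition λ of n, the potential energy satisfies U(B(λ)) ≤ U(λ), where B is the Bulgarian solitaire operator. -/

import Mathlib

/-- A partition of `n`: a multiset of positive integers summing to `n`
(multisets model nonincreasing sequences, since order is irrelevant). -/
def IsPartition (n : ℕ) (l : Multiset ℕ) : Prop :=
  l.sum = n ∧ ∀ x ∈ l, 0 < x

/-- The Bulgarian solitaire move: remove one card from each pile, discard empty
piles, and add a new pile whose size is the number of old piles. -/
def bulg (l : Multiset ℕ) : Multiset ℕ :=
  (Multiset.card l ::ₘ l.map (· - 1)).filter (0 < ·)

/-- The staircase partition `(k, k-1, …, 2, 1)`. -/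
def staircase (k : ℕ) : Multiset ℕ := (Multiset.range k).map (· + 1)

/-- Potential energy `U(λ) = Σ (i + j)` over the cells of the Young diagram,
the rows taken in nonincreasing order. -/
def energy (l : Multiset ℕ) : ℕ :=
  ((l.sort (· ≥ ·)).zipIdx.map fun p => ∑ j ∈ Finset.range p.1, ((p.2 + 1) + (j + 1))).sum

/-! Auxiliary development -/

/-- triangular sum -/
def Tl (a : ℕ) : ℕ := ∑ j ∈ Finset.range a, j

lemma Tl_succ (a : ℕ) : Tl (a + 1) = Tl a + a := Finset.sum_range_succ _ _

/-- energy of a list of rows, starting at row index `k` (0-based). -/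
def E' : ℕ → List ℕ → ℕ
  | _, [] => 0
  | k, a :: t => (a * (k + 2) + Tl a) + E' (k + 1) t

lemma inner_term (i a : ℕ) :
    (∑ j ∈ Finset.range a, ((i + 1) + (j + 1))) = a * (i + 2) + Tl a := by
  unfold Tl
  rw [show (fun j => (i + 1) + (j + 1)) = (fun j => (i + 2) + j) by funext j; omega]
  rw [Finset.sum_add_distrib, Finset.sum_const, Finset.card_range, smul_eq_mul, mul_comm]

lemma enumFrom_sum (L : List ℕ) : ∀ k,
    ((L.zipIdx k).map fun p => ∑ j ∈ Finset.range p.1, ((p.2 + 1) + (j + 1))).sum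
      = E' k L := by
  induction L with
  | nil => intro k; simp [E']
  | cons a t ih =>
      intro k
      simp only [List.zipIdx_cons, List.map_cons, List.sum_cons]
      rw [ih (k + 1), inner_term]
      rfl

lemma energy_eq (m : Multiset ℕ) : energy m = E' 0 (m.sort (· ≥ ·)) := by
  rw [energy, enumFrom_sum]

lemma E'_shift (L : List ℕ) : ∀ k, E' (k + 1) L = E' k L + L.sum := by
  induction L with
  | nil => intro k; simp [E']
  | cons a t ih =>
      intro k
      simp only [E', List.sum_cons, ih (k + 1)]
      ring

lemma E'_append (A : List ℕ) : ∀ (B : List ℕ) (k),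
    E' k (A ++ B) = E' k A + E' (k + A.length) B := by
  induction A with
  | nil => intro B k; simp [E']
  | cons a t ih =>
      intro B k
      rw [show E' k ((a :: t) ++ B) = a * (k + 2) + Tl a + E' (k + 1) (t ++ B) from rfl,
        ih B (k + 1), show E' k (a :: t) = a * (k + 2) + Tl a + E' (k + 1) t from rfl,
        List.length_cons, show k + 1 + t.length = k + (t.length + 1) by omega]
      ring

/-- moving a maximal element to the front does not increase `E'`. -/
lemma E'_swap (b : ℕ) (P Q : List ℕ) (k : ℕ) (hb : ∀ x ∈ P, x ≤ b) :
    E' k (b :: (P ++ Q)) ≤ E' k (P ++ b :: Q) := by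
  have hP : P.sum ≤ P.length * b := by simpa using List.sum_le_card_nsmul P b hb
  have h1 : E' k (b :: (P ++ Q))
      = (b * (k + 2) + Tl b) + (E' (k + 1) P + E' (k + 1 + P.length) Q) := by
    simp [E', E'_append]
  have h2 : E' k (P ++ b :: Q)
      = E' k P + ((b * (k + P.length + 2) + Tl b) + E' (k + P.length + 1) Q) := by
    rw [E'_append, show E' (k + P.length) (b :: Q) = (b * (k + P.length + 2) + Tl b) + E' (k + P.length + 1) Q from rfl]
  have h3 : E' (k + 1) P = E' k P + P.sum := E'_shift P k
  have h4 : k + 1 + P.length = k + P.length + 1 := by omega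
  rw [h1, h2, h3, h4]
  nlinarith [hP]

/-- Rearrangement: the nonincreasing arrangement minimizes `E'`. -/
lemma E'_sorted_le (L' : List ℕ) : ∀ (L : List ℕ) (k : ℕ),
    L.Perm L' → L'.Pairwise (· ≥ ·) → E' k L' ≤ E' k L := by
  induction L' with
  | nil => intro L k hp _; rw [List.perm_nil.mp hp]
  | cons b T ih =>
      intro L k hp hs
      have hbL : b ∈ L := (hp.mem_iff).mpr (List.mem_cons_self (a := b) (l := T))
      obtain ⟨P, Q, rfl⟩ := List.append_of_mem hbL
      have hmid : (P ++ b :: Q).Perm (b :: (P ++ Q)) := List.perm_middle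
      have hT : (P ++ Q).Perm T := ((hmid.symm.trans hp).cons_inv)
      have hbmax : ∀ x ∈ P, x ≤ b := by
        intro x hx
        have hxL : x ∈ b :: T := hp.mem_iff.mp (by simp [hx])
        rcases List.mem_cons.mp hxL with h | h
        · exact le_of_eq h
        · exact List.rel_of_pairwise_cons hs h
      calc E' k (b :: T) = (b * (k + 2) + Tl b) + E' (k + 1) T := rfl
        _ ≤ (b * (k + 2) + Tl b) + E' (k + 1) (P ++ Q) := by
              have := ih (P ++ Q) (k + 1) hT (List.pairwise_cons.mp hs).2
              omega
        _ = E' k (b :: (P ++ Q)) := rfl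
        _ ≤ E' k (P ++ b :: Q) := E'_swap b P Q k hbmax

lemma sum_filter_le (t : List ℕ) : (t.filter (fun x => decide (0 < x))).sum ≤ t.sum := by
  induction t with
  | nil => simp
  | cons a t ih =>
      by_cases h : 0 < a <;> simp [List.filter_cons, h] <;> omega

/-- removing zero rows does not increase `E'`. -/
lemma E'_filter_le (t : List ℕ) : ∀ k, E' k (t.filter (fun x => decide (0 < x))) ≤ E' k t := by
  induction t with
  | nil => intro k; simp
  | cons a t ih =>
      intro k
      by_cases h : 0 < a
      · rw [show (a :: t).filter (fun x => decide (0 < x)) = a :: t.filter (fun x => decide (0 < x)) by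
            simp [List.filter_cons, h]]
        simp only [E']
        have := ih (k + 1)
        omega
      · have ha : a = 0 := by omega
        subst ha
        rw [show (0 :: t).filter (fun x => decide (0 < x)) = t.filter (fun x => decide (0 < x)) by
            simp [List.filter_cons]]
        calc E' k (t.filter (fun x => decide (0 < x))) ≤ E' k t := ih k
          _ ≤ E' k t + t.sum := Nat.le_add_right _ _
          _ = E' (k + 1) t := (E'_shift t k).symm
          _ = E' k (0 :: t) := by simp [E', Tl]

lemma sum_map_pred (s : List ℕ) (hs : ∀ x ∈ s, 0 < x) :
    (s.map (fun x => x - 1)).sum + s.length = s.sum := by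
  induction s with
  | nil => simp
  | cons a t ih =>
      have ha : 0 < a := hs a (by simp)
      have := ih (fun x hx => hs x (by simp [hx]))
      simp only [List.map_cons, List.sum_cons, List.length_cons]
      omega

lemma E'_step (s : List ℕ) : ∀ k, (∀ x ∈ s, 0 < x) →
    E' k s = E' k (s.map (fun x => x - 1)) + s.sum + s.length * k + Tl s.length + s.length := by
  induction s with
  | nil => intro k _; simp [E', Tl]
  | cons a t ih =>
      intro k hs
      have ha : 0 < a := hs a (by simp)
      have iht := ih (k + 1) (fun x hx => hs x (by simp [hx]))
      simp only [E', List.map_cons, List.sum_cons, List.length_cons, iht]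
      have hTa : Tl a = Tl (a - 1) + (a - 1) := by
        conv_lhs => rw [show a = (a - 1) + 1 by omega]
        rw [Tl_succ]
      have hTt : Tl (t.length + 1) = Tl t.length + t.length := Tl_succ _
      rw [hTa, hTt]
      have h1 : a * (k + 2) = (a - 1) * (k + 2) + (k + 2) := by
        have h : a = (a - 1) + 1 := by omega
        nlinarith [h]
      rw [h1]
      have h2 : t.length * (k + 1) = t.length * k + t.length := by ring
      have h3 : (t.length + 1) * k = t.length * k + k := by ring
      rw [h2] at *
      omega

/-- key list-level inequality for the Bulgarian move arrangement. -/
lemma list_key (s : List ℕ) (hspos : ∀ x ∈ s, 0 < x) :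
    E' 0 ((s.length :: s.map (fun x => x - 1)).filter (fun x => decide (0 < x))) ≤ E' 0 s := by
  have h1 := E'_filter_le (s.length :: s.map (fun x => x - 1)) 0
  have h2 : E' 0 (s.length :: s.map (fun x => x - 1)) = E' 0 s := by
    have hstep := E'_step s 0 hspos
    have hsummap := sum_map_pred s hspos
    have hshift := E'_shift (s.map (fun x => x - 1)) 0
    have hc : E' 0 (s.length :: s.map (fun x => x - 1))
        = s.length * 2 + Tl s.length + E' 1 (s.map (fun x => x - 1)) := rfl
    rw [hc, hshift]
    have hlen : (s.map (fun x => x - 1)).length = s.length := by simp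
    omega
  omega

theorem bulg_energy_le (n : ℕ) (l : Multiset ℕ) (hl : IsPartition n l) :
    energy (bulg l) ≤ energy l := by
  obtain ⟨hsum, hpos⟩ := hl
  set s : List ℕ := l.sort (· ≥ ·) with hs
  have hcoe : (↑s : Multiset ℕ) = l := Multiset.sort_eq _ _
  have hspos : ∀ x ∈ s, 0 < x := fun x hx => hpos x (hcoe ▸ Multiset.mem_coe.mpr hx)
  have hclen : Multiset.card l = s.length := by rw [← hcoe]; simp
  set L0 : List ℕ := (s.length :: s.map (fun x => x - 1)).filter (fun x => decide (0 < x)) with hL0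
  have hbulg : bulg l = (↑L0 : Multiset ℕ) := by
    rw [bulg, ← hcoe, hL0]
    simp [hclen, Multiset.map_coe, Multiset.filter_coe]
  have hperm : ((bulg l).sort (· ≥ ·)).Perm L0 := by
    rw [← Multiset.coe_eq_coe, Multiset.sort_eq, hbulg]
  have h1 : energy (bulg l) = E' 0 ((bulg l).sort (· ≥ ·)) := energy_eq _
  have h2 : E' 0 ((bulg l).sort (· ≥ ·)) ≤ E' 0 L0 :=
    E'_sorted_le _ L0 0 hperm.symm (Multiset.pairwise_sort _ _)
  have h3 : E' 0 L0 ≤ E' 0 s := list_key s hspos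
  have h4 : E' 0 s = energy l := (energy_eq l).symm
  omega
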